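/- arXiv:0802.1453 — 4 statements merged into one kernel-verified Lean document; each statement's English description precedes it below -/
import Mathlib

section
/- If n ≥ 1 and the number 4n² + 1 is coprime to 4k² + 1 for every k with 1 ≤ k < n, then 4n² + 1 is prime. -/
theorem stmt_2 (n : ℕ) (hn : 1 ≤ n)
    (h : ∀ k : ℕ, 1 ≤ k → k < n → Nat.gcd (4 * n ^ 2 + 1) (4 * k ^ 2 + 1) = 1) :
    Nat.Prime (4 * n ^ 2 + 1) := by
  by_contra hnp
  set N := 4 * n ^ 2 + 1 with hN
  have hN1 : 1 < N := by nlinarith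
  set p := N.minFac with hp
  have hpp : p.Prime := Nat.minFac_prime (by omega)
  have hpd : p ∣ N := Nat.minFac_dvd N
  have hsq : p ^ 2 ≤ N := Nat.minFac_sq_le_self (by omega) hnp
  have hodd : N % 2 = 1 := by omega
  have hpodd : p % 2 = 1 := by
    by_contra hc
    have h2p : 2 ∣ p := by omega
    have := Nat.Prime.eq_one_or_self_of_dvd hpp 2 h2p
    have hp2 : p = 2 := by omega
    have : 2 ∣ N := hp2 ▸ hpd
    omega
  have hple2 : p ≤ 2 * n := by nlinarith
  have hple : p ≤ 2 * n - 1 := by omega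
  have hppos : 0 < p := hpp.pos
  set r := n % p with hr
  have hrlt : r < p := Nat.mod_lt _ hppos
  have hr0 : r ≠ 0 := by
    intro h0
    have hpn : p ∣ n := Nat.dvd_of_mod_eq_zero h0
    have : p ∣ 4 * n ^ 2 := by
      exact Dvd.dvd.mul_left (by exact Dvd.dvd.pow hpn (by norm_num)) 4
    have hp1 : p ∣ 1 := (Nat.dvd_add_right this).mp hpd
    exact hpp.one_lt.ne' (Nat.dvd_one.mp hp1)
  set k := min r (p - r) with hk
  have hk1 : 1 ≤ k := by omega
  have hkn : k < n := by omega
  haveI : NeZero p := ⟨hppos.ne'⟩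
  have hcastn : ((k : ZMod p) = (n : ZMod p)) ∨ ((k : ZMod p) = -(n : ZMod p)) := by
    have hrn : ((r : ZMod p)) = (n : ZMod p) := by
      rw [hr]; exact ZMod.natCast_mod n p
    rcases min_choice r (p - r) with hmin | hmin
    · left; rw [hk, hmin, hrn]
    · right
      rw [hk, hmin, Nat.cast_sub hrlt.le, ZMod.natCast_self, zero_sub, hrn]
  have hdvdk : p ∣ 4 * k ^ 2 + 1 := by
    have h0 : ((4 * n ^ 2 + 1 : ℕ) : ZMod p) = 0 := (ZMod.natCast_eq_zero_iff _ _).mpr hpd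
    have : ((4 * k ^ 2 + 1 : ℕ) : ZMod p) = 0 := by
      push_cast at h0 ⊢
      rcases hcastn with hc | hc <;> rw [hc] <;> [exact h0; (ring_nf; ring_nf at h0; exact h0)]
    exact (ZMod.natCast_eq_zero_iff _ _).mp this
  have hgcd := h k hk1 hkn
  have : p ∣ 1 := hgcd ▸ Nat.dvd_gcd hpd hdvdk
  exact hpp.one_lt.ne' (Nat.dvd_one.mp this)
end

section
/- Let p be a prime with p ≡ 1 (mod 4), let g be a primitive root modulo p, and let t be the least positive residue of g^((p-1)/4) modulo p. Then setting r = t/2 if t is even and r = (p - t)/2 if t is odd, we have p divides 4r² + 1. -/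
theorem stmt_7 (p : ℕ) [Fact p.Prime] (hp : p % 4 = 1)
    (g : (ZMod p)ˣ) (hg : ∀ x : (ZMod p)ˣ, x ∈ Subgroup.zpowers g)
    (t : ℕ) (ht0 : 0 < t) (htp : t < p)
    (ht : (t : ZMod p) = ((g ^ ((p - 1) / 4) : (ZMod p)ˣ) : ZMod p))
    (r : ℕ) (hr : r = if t % 2 = 0 then t / 2 else (p - t) / 2) :
    p ∣ 4 * r ^ 2 + 1 := by
  have hprime := (Fact.out : p.Prime)
  have hp2 := hprime.two_le
  have hp5 : 5 ≤ p := by omega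
  have h4 : 4 ∣ p - 1 := by omega
  have hog : orderOf g = p - 1 := by
    rw [orderOf_eq_card_of_forall_mem_zpowers hg]
    simp [ZMod.card_units_eq_totient, Nat.totient_prime hprime]
  -- g^((p-1)/2) = -1 as an element of ZMod p
  have hsq : ((g : ZMod p)) ^ ((p - 1) / 2) = -1 := by
    set u : ZMod p := (g : ZMod p) ^ ((p - 1) / 2) with hu
    have hu2 : u ^ 2 = 1 := by
      rw [hu, ← pow_mul]
      have h1 : (p - 1) / 2 * 2 = p - 1 := by omega
      rw [h1]
      have h2 : g ^ (p - 1) = 1 := by rw [← hog]; exact pow_orderOf_eq_one g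
      have h3 : (g : ZMod p) ^ (p - 1) = ((g ^ (p - 1) : (ZMod p)ˣ) : ZMod p) := by
        push_cast; ring
      rw [h3, h2]; simp
    have hu1 : u ≠ 1 := by
      intro h
      have hgu : g ^ ((p - 1) / 2) = 1 := by
        ext
        simpa [hu] using h
      have hd := orderOf_dvd_of_pow_eq_one hgu
      rw [hog] at hd
      have := Nat.le_of_dvd (by omega) hd
      omega
    have hmul : (u - 1) * (u + 1) = 0 := by ring_nf; linear_combination hu2
    rcases mul_eq_zero.mp hmul with h | h
    · exact absurd (sub_eq_zero.mp h) hu1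
    · exact eq_neg_of_add_eq_zero_left h
  have ht2 : ((t : ZMod p)) ^ 2 = -1 := by
    rw [ht]
    have h5 : ((g ^ ((p - 1) / 4) : (ZMod p)ˣ) : ZMod p) ^ 2 = (g : ZMod p) ^ ((p - 1) / 2) := by
      push_cast
      rw [← pow_mul]
      congr 1
      omega
    rw [h5, hsq]
  have key : ((4 * r ^ 2 + 1 : ℕ) : ZMod p) = 0 := by
    have h2r : (2 * r : ℕ) = t ∨ (2 * r : ℕ) = p - t := by
      rcases Nat.mod_two_eq_zero_or_one t with h | h
      · left; rw [hr, if_pos h]; omega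
      · right; rw [hr, if_neg (by omega)]; omega
    have goal : ((2 * r : ℕ) : ZMod p) ^ 2 + 1 = 0 := by
      rcases h2r with h | h
      · rw [h, ht2]; ring
      · rw [h]
        have hneg : ((p - t : ℕ) : ZMod p) = -(t : ZMod p) := by
          have hc : ((p - t : ℕ) : ZMod p) + (t : ZMod p) = 0 := by
            rw [← Nat.cast_add, (by omega : p - t + t = p)]
            exact ZMod.natCast_self p
          exact eq_neg_of_add_eq_zero_left hc
        rw [hneg, neg_sq, ht2]; ring
    push_cast at goal ⊢
    linear_combination goal
  exact (ZMod.natCast_eq_zero_iff _ _).mp key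
end

section
/- Let m > 1 be an odd integer for which 4z² ≡ -1 (mod m) is solvable, let r(m) be the least positive solution, and define x(m) = (4r(m)² + 1)/m. Then x(m) ≤ m - 2. -/
theorem stmt_9 (m r x : ℕ) (hm : 1 < m) (hodd : Odd m)
    (hr0 : 0 < r) (hdvd : m ∣ 4 * r ^ 2 + 1)
    (hleast : ∀ z : ℕ, 0 < z → m ∣ 4 * z ^ 2 + 1 → r ≤ z)
    (hx : 4 * r ^ 2 + 1 = m * x) :
    x ≤ m - 2 := by
  have hm0 : 0 < m := by omega
  -- r < m
  have hrm : r < m := by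
    by_contra h
    push_neg at h
    have hmod : (r % m) ≡ r [MOD m] := Nat.mod_modEq r m
    have h2 : 4 * (r % m) ^ 2 + 1 ≡ 4 * r ^ 2 + 1 [MOD m] :=
      ((hmod.pow 2).mul_left 4).add_right 1
    have h3 : m ∣ 4 * (r % m) ^ 2 + 1 :=
      (Nat.modEq_zero_iff_dvd).mp (h2.trans ((Nat.modEq_zero_iff_dvd).mpr hdvd))
    have h4 : 0 < r % m := by
      rcases Nat.eq_zero_or_pos (r % m) with h0 | h0
      · exfalso
        have hd : m ∣ r := Nat.dvd_of_mod_eq_zero h0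
        have : m ∣ 4 * r ^ 2 := Dvd.dvd.mul_left (hd.pow (by norm_num)) 4
        have h1 : m ∣ 1 := (Nat.dvd_add_right this).mp hdvd
        exact absurd (Nat.le_of_dvd one_pos h1) (by omega)
      · exact h0
    have := hleast (r % m) h4 h3
    have : r % m < m := Nat.mod_lt _ hm0
    omega
  -- m - r is also a solution
  have hsub : m ∣ 4 * (m - r) ^ 2 + 1 := by
    have h0 : ((4 * r ^ 2 + 1 : ℕ) : ZMod m) = 0 :=
      (ZMod.natCast_eq_zero_iff _ _).mpr hdvd
    have h1 : ((4 * (m - r) ^ 2 + 1 : ℕ) : ZMod m) = 0 := by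
      push_cast [Nat.cast_sub hrm.le]
      push_cast at h0
      rw [ZMod.natCast_self m]
      linear_combination h0
    exact (ZMod.natCast_eq_zero_iff _ _).mp h1
  have h5 : r ≤ m - r := hleast (m - r) (by omega) hsub
  -- m odd ⇒ 2r+1 ≤ m
  obtain ⟨a, ha⟩ := hodd
  have h6 : 2 * r + 1 ≤ m := by omega
  -- x < m
  have h7 : m * x < m * m := by nlinarith
  have h8 : x < m := Nat.lt_of_mul_lt_mul_left h7
  -- x is odd
  have hox : Odd x := by
    have : Odd (m * x) := by rw [← hx]; exact ⟨2 * r ^ 2, by ring⟩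
    exact (Nat.odd_mul.mp this).2
  obtain ⟨b, hb⟩ := hox
  omega
end

section
/- Let m > 1 be an odd integer such that both congruences 4z² ≡ -1 (mod m) and 4z² ≡ -1 (mod m²) are solvable, with least positive solutions r(m) and r(m²) respectively. Then r(m) < r(m²). -/
theorem stmt_10 (m r r2 : ℕ) (hm : 1 < m) (hodd : Odd m)
    (hr0 : 0 < r) (hdvd : m ∣ 4 * r ^ 2 + 1)
    (hleast : ∀ z : ℕ, 0 < z → m ∣ 4 * z ^ 2 + 1 → r ≤ z)
    (hr20 : 0 < r2) (hdvd2 : m ^ 2 ∣ 4 * r2 ^ 2 + 1)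
    (hleast2 : ∀ z : ℕ, 0 < z → m ^ 2 ∣ 4 * z ^ 2 + 1 → r2 ≤ z) :
    r < r2 := by
  by_contra hc
  push_neg at hc
  have hm0 : 0 < m := by omega
  have hmm : m ∣ m ^ 2 := dvd_pow_self m two_ne_zero
  have hr2le : r ≤ r2 := hleast r2 hr20 (hmm.trans hdvd2)
  have heq : r = r2 := le_antisymm hr2le hc
  subst heq
  -- step 1: r < m
  have hndvd : ¬ m ∣ r := by
    intro h
    have h4 : m ∣ 4 * r ^ 2 := Dvd.dvd.mul_left (h.pow two_ne_zero) 4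
    have := Nat.le_of_dvd one_pos ((Nat.dvd_add_right h4).mp hdvd)
    omega
  have hs0 : 0 < r % m := Nat.pos_of_ne_zero (fun h => hndvd (Nat.dvd_of_mod_eq_zero h))
  have hmod : (4 * (r % m) ^ 2 + 1) ≡ (4 * r ^ 2 + 1) [MOD m] :=
    (((Nat.mod_modEq r m).pow 2).mul_left 4).add_right 1
  have hdvds : m ∣ 4 * (r % m) ^ 2 + 1 :=
    (Nat.modEq_zero_iff_dvd).mp (hmod.trans ((Nat.modEq_zero_iff_dvd).mpr hdvd))
  have hrm : r < m := lt_of_le_of_lt (hleast _ hs0 hdvds) (Nat.mod_lt _ hm0)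
  -- step 2: m ∣ 4(m-r)²+1 and hence r ≤ m - r
  have ht0 : 0 < m - r := by omega
  have hdvdt : m ∣ 4 * (m - r) ^ 2 + 1 := by
    have hz : (m : ℤ) ∣ 4 * ((m : ℤ) - r) ^ 2 + 1 := by
      have h1 : (m : ℤ) ∣ 4 * (r : ℤ) ^ 2 + 1 := by exact_mod_cast hdvd
      have he : 4 * ((m : ℤ) - r) ^ 2 + 1 = (m : ℤ) * (4 * m - 8 * r) + (4 * r ^ 2 + 1) := by
        ring
      rw [he]
      exact dvd_add (Dvd.intro _ rfl) h1
    have hcast : ((m - r : ℕ) : ℤ) = (m : ℤ) - r := by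
      push_cast [Nat.cast_sub hrm.le]; ring
    have : (m : ℤ) ∣ 4 * ((m - r : ℕ) : ℤ) ^ 2 + 1 := by rw [hcast]; exact hz
    exact_mod_cast this
  have hle : r ≤ m - r := hleast _ ht0 hdvdt
  have hm2 : m % 2 = 1 := Nat.odd_iff.mp hodd
  have h2r : 2 * r + 1 ≤ m := by omega
  -- step 3: contradiction with m² ∣ 4r²+1
  have hle2 : m ^ 2 ≤ 4 * r ^ 2 + 1 := Nat.le_of_dvd (by positivity) hdvd2
  nlinarith [hr0, h2r, hle2]
end
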